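/- (Outer radius, Theorem 2.) Assume the framework setup and suppose D < 1/2. Define η₂ = L·(√(μ̄+4) − √μ̄)/2 − η₁ if D < 1/4 + (1/8)(√μ̄·√(μ̄+4) − μ̄), and η₂ = L·(√(μ̄+2) − √μ̄)/2 otherwise. Then η₂ > η₁, and every configuration q ∈ 𝒞^p with the same edge lengths as p (i.e. |q_i − q_j| = |p_i − p_j| for every edge (i,j) ∈ E) and with |q − p| > η₁ satisfies |q − p| ≥ η₂. -/

import Mathlib

noncomputable section
open scoped BigOperators InnerProductSpace Classical

/-- Configuration space of `n` points in `ℝ^d`, with the Euclidean norm on `ℝ^{dn}`. -/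
abbrev Config (n d : ℕ) := PiLp 2 (fun _ : Fin n => EuclideanSpace ℝ (Fin d))

/-- The rigidity operator `R(q)` applied to `u`: the `k`-th entry, for edge `k = (i,j)`,
is `⟨q_i - q_j, u_i - u_j⟩`. -/
def rig {n d m : ℕ} (E : Fin m → Fin n × Fin n) (q u : Config n d) :
    EuclideanSpace ℝ (Fin m) :=
  WithLp.toLp 2 (fun k => ⟪q (E k).1 - q (E k).2, u (E k).1 - u (E k).2⟫_ℝ)

/-- The stress form `Ω_ω(v) = Σ_{(i,j)∈E} ω_{ij} |v_i - v_j|²`. -/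
def stressForm {n d m : ℕ} (E : Fin m → Fin n × Fin n)
    (ω : EuclideanSpace ℝ (Fin m)) (v : Config n d) : ℝ :=
  ∑ k, ω k * ‖v (E k).1 - v (E k).2‖ ^ 2

/-- The vector `ωᵀ R(p) ∈ ℝ^{dn}` whose `l`-th block is `Σ_{j : (l,j)∈E} ω_{lj} (p_l - p_j)`. -/
def stressGrad {n d m : ℕ} (E : Fin m → Fin n × Fin n)
    (ω : EuclideanSpace ℝ (Fin m)) (p : Config n d) : Config n d :=
  WithLp.toLp 2 (fun l => ∑ k, (((if (E k).1 = l then (1:ℝ) else 0) - (if (E k).2 = l then (1:ℝ) else 0)) * ω k) •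
    (p (E k).1 - p (E k).2))

/-- The vector `e(q) ∈ ℝ^m` of squared edge lengths. -/
def esq {n d m : ℕ} (E : Fin m → Fin n × Fin n) (q : Config n d) :
    EuclideanSpace ℝ (Fin m) :=
  WithLp.toLp 2 (fun k => ‖q (E k).1 - q (E k).2‖ ^ 2)

/-- `z` bounds the number of edges incident to each vertex (`z ≥` the maximum adjacency). -/
def degBound {n m : ℕ} (E : Fin m → Fin n × Fin n) (z : ℝ) : Prop :=
  ∀ l : Fin n, ((Finset.univ.filter (fun k => (E k).1 = l ∨ (E k).2 = l)).card : ℝ) ≤ z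


-- ===== auxiliary lemmas =====

private lemma cubicExclude (L η₁ η₂ t : ℝ) (h0 : 0 ≤ η₁) (h12 : η₁ < η₂)
    (hsm : 2*η₂^2 ≤ L^2) (ht1 : η₁ < t) (ht2 : t < η₂)
    (hcubic : 0 ≤ t^3 - 4*L^2*t + 2*L^2*η₁) : False := by
  have hA : 0 < t - η₁ := sub_pos.2 ht1
  have ht0 : 0 ≤ t := le_of_lt (lt_of_le_of_lt h0 ht1)
  have hsq : t^2 < η₂^2 := by nlinarith
  have hsq1 : η₁^2 < η₂^2 := by nlinarith
  have hB : 0 < 4*L^2 - (t^2 + t*η₁ + η₁^2) := by nlinarith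
  nlinarith [mul_pos hA hB, mul_nonneg h0 (show 0 ≤ 2*L^2 - η₁^2 by nlinarith)]

private lemma outerAux1 (L η₁ s u : ℝ) (hL : 0 < L) (h0 : 0 ≤ η₁) (hs0 : 0 ≤ s)
    (hs2 : 1/2 ≤ s^2) (hu0 : 0 ≤ u) (hu2 : u^2 = s^2 + 4)
    (hc : (η₁/L) * (s + η₁/L) < 1/4 + (1/8)*(s*u - s^2)) :
    η₁ < L*(u - s)/2 - η₁ ∧ 2*(L*(u - s)/2 - η₁)^2 ≤ L^2 := by
  set x := η₁ / L with hxdef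
  have hxL : η₁ = x * L := by rw [hxdef, div_mul_cancel₀ _ hL.ne']
  have hx0 : 0 ≤ x := div_nonneg h0 hL.le
  have h4x : 4*x < u - s := by
    nlinarith [sq_nonneg (u - s - 4*x), mul_nonneg hs0 hx0]
  have hgap : η₁ < L*(u - s)/2 - η₁ := by nlinarith
  have hus : (u - s)^2 ≤ 2 := by
    have h1 : s^2 + 1 ≤ u*s := by
      nlinarith [mul_nonneg hu0 hs0, sq_nonneg (u*s - s^2 - 1)]
    nlinarith
  refine ⟨hgap, ?_⟩
  have h1 : 0 ≤ L*(u - s)/2 - η₁ := by linarith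
  have h2 : L*(u - s)/2 - η₁ ≤ L*(u - s)/2 := by linarith
  nlinarith [sq_nonneg (u - s), mul_nonneg (mul_nonneg hL.le (by linarith : (0:ℝ) ≤ u - s)) h0]

private lemma outerAux2 (L η₁ s w : ℝ) (hL : 0 < L) (h0 : 0 ≤ η₁) (hs0 : 0 ≤ s)
    (hs2 : 1/2 ≤ s^2) (hw0 : 0 ≤ w) (hw2 : w^2 = s^2 + 2)
    (hc : (η₁/L) * (s + η₁/L) < 1/2) :
    η₁ < L*(w - s)/2 ∧ 2*(L*(w - s)/2)^2 ≤ L^2 := by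
  set x := η₁ / L with hxdef
  have hxL : η₁ = x * L := by rw [hxdef, div_mul_cancel₀ _ hL.ne']
  have hx0 : 0 ≤ x := div_nonneg h0 hL.le
  have h2x : 2*x < w - s := by
    nlinarith [sq_nonneg (w - s - 2*x), mul_nonneg hs0 hx0]
  constructor
  · nlinarith
  · have hws : (w - s)^2 ≤ 2 := by
      have : s ≤ w := by nlinarith
      nlinarith [mul_nonneg hw0 hs0]
    nlinarith [sq_nonneg L]

private lemma inner_stressGrad {n d m : ℕ} (E : Fin m → Fin n × Fin n)
    (ω : EuclideanSpace ℝ (Fin m)) (p v : Config n d) :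
    ⟪stressGrad E ω p, v⟫_ℝ = ∑ k, ω k * rig E p v k := by
  rw [PiLp.inner_apply]
  have h1 : ∀ l, ⟪stressGrad E ω p l, v l⟫_ℝ
      = ∑ k, ((if (E k).1 = l then ω k * ⟪p (E k).1 - p (E k).2, v l⟫_ℝ else 0)
            - (if (E k).2 = l then ω k * ⟪p (E k).1 - p (E k).2, v l⟫_ℝ else 0)) := by
    intro l
    simp only [stressGrad, PiLp.toLp_apply, sum_inner, real_inner_smul_left]
    refine Finset.sum_congr rfl fun k _ => ?_
    split_ifs <;> ring
  simp_rw [h1, Finset.sum_sub_distrib]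
  rw [Finset.sum_comm (γ := Fin n)]
  rw [Finset.sum_comm (γ := Fin n) (f := fun l k => (if (E k).2 = l then ω k * ⟪p (E k).1 - p (E k).2, v l⟫_ℝ else 0))]
  simp_rw [Finset.sum_ite_eq, Finset.mem_univ, if_true]
  rw [← Finset.sum_sub_distrib]
  refine Finset.sum_congr rfl fun k _ => ?_
  simp only [rig, PiLp.toLp_apply]
  rw [inner_sub_right]
  ring

private lemma sq_norm_sub_le {n d : ℕ} (v : Config n d) (i j : Fin n) (hij : i ≠ j) :
    ‖v i - v j‖^2 ≤ 2 * ‖v‖^2 := by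
  have hnorm : ‖v‖^2 = ∑ l, ‖v l‖^2 := PiLp.norm_sq_eq_of_L2 _ v
  have h1 : ‖v i‖^2 + ‖v j‖^2 ≤ ‖v‖^2 := by
    rw [hnorm]
    have h2 : ∑ l ∈ ({i, j} : Finset (Fin n)), ‖v l‖^2 ≤ ∑ l, ‖v l‖^2 :=
      Finset.sum_le_sum_of_subset_of_nonneg (Finset.subset_univ _)
        (fun l _ _ => by positivity)
    rwa [Finset.sum_pair hij] at h2
  have h3 := norm_sub_le (v i) (v j)
  nlinarith [sq_nonneg (‖v i‖ - ‖v j‖), norm_nonneg (v i), norm_nonneg (v j),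
    norm_nonneg (v i - v j)]

private lemma sum_sq_norm_sub_le {n d m : ℕ} (E : Fin m → Fin n × Fin n)
    (hE : ∀ k, (E k).1 ≠ (E k).2) (z : ℝ) (hdeg : degBound E z) (v : Config n d) :
    ∑ k, ‖v (E k).1 - v (E k).2‖^2 ≤ 2 * z * ‖v‖^2 := by
  have step1 : ∀ k, ‖v (E k).1 - v (E k).2‖^2
      ≤ 2 * (‖v (E k).1‖^2 + ‖v (E k).2‖^2) := by
    intro k
    have h3 := norm_sub_le (v (E k).1) (v (E k).2)
    nlinarith [sq_nonneg (‖v (E k).1‖ - ‖v (E k).2‖), norm_nonneg (v (E k).1),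
      norm_nonneg (v (E k).2), norm_nonneg (v (E k).1 - v (E k).2)]
  have step2 : ∀ k, ‖v (E k).1‖^2 + ‖v (E k).2‖^2
      = ∑ l, if (E k).1 = l ∨ (E k).2 = l then ‖v l‖^2 else 0 := by
    intro k
    rw [← Finset.sum_filter]
    have hf : (Finset.univ.filter (fun l => (E k).1 = l ∨ (E k).2 = l))
        = {(E k).1, (E k).2} := by
      ext l; simp [eq_comm]
    rw [hf, Finset.sum_pair (hE k)]
  calc ∑ k, ‖v (E k).1 - v (E k).2‖^2
      ≤ ∑ k, 2 * (‖v (E k).1‖^2 + ‖v (E k).2‖^2) :=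
        Finset.sum_le_sum (fun k _ => step1 k)
    _ = 2 * ∑ k, ∑ l, (if (E k).1 = l ∨ (E k).2 = l then ‖v l‖^2 else 0) := by
        rw [← Finset.mul_sum]; congr 1; exact Finset.sum_congr rfl fun k _ => step2 k
    _ = 2 * ∑ l, ∑ k, (if (E k).1 = l ∨ (E k).2 = l then ‖v l‖^2 else 0) := by
        rw [Finset.sum_comm]
    _ ≤ 2 * ∑ l, z * ‖v l‖^2 := by
        have hb : ∀ l : Fin n, ∑ k, (if (E k).1 = l ∨ (E k).2 = l then ‖v l‖^2 else 0)
            ≤ z * ‖v l‖^2 := by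
          intro l
          rw [← Finset.sum_filter, Finset.sum_const, nsmul_eq_mul]
          exact mul_le_mul_of_nonneg_right (hdeg l) (by positivity)
        have h := Finset.sum_le_sum (fun l (_ : l ∈ Finset.univ) => hb l)
        linarith
    _ = 2 * z * ‖v‖^2 := by
        rw [← Finset.mul_sum, PiLp.norm_sq_eq_of_L2 _ v]; ring

private lemma norm_rig_sq_le {n d m : ℕ} (E : Fin m → Fin n × Fin n)
    (hE : ∀ k, (E k).1 ≠ (E k).2) (z : ℝ) (hdeg : degBound E z)
    (p v : Config n d)
    (hlen : ∀ k, rig E p v k = -(1/2) * ‖v (E k).1 - v (E k).2‖^2) :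
    ‖rig E p v‖^2 ≤ z * (‖v‖^2)^2 := by
  have hnr : ‖rig E p v‖^2 = ∑ k, (rig E p v k)^2 := by
    rw [PiLp.norm_sq_eq_of_L2 _ (rig E p v)]
    exact Finset.sum_congr rfl fun k _ => by rw [Real.norm_eq_abs, sq_abs]
  have hb : ∀ k, (rig E p v k)^2 ≤ (1/2) * ‖v‖^2 * ‖v (E k).1 - v (E k).2‖^2 := by
    intro k
    rw [hlen k]
    have h1 : ‖v (E k).1 - v (E k).2‖^2 ≤ 2 * ‖v‖^2 :=
      sq_norm_sub_le v _ _ (hE k)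
    have h2 : (0:ℝ) ≤ ‖v (E k).1 - v (E k).2‖^2 := by positivity
    nlinarith
  calc ‖rig E p v‖^2 = ∑ k, (rig E p v k)^2 := hnr
    _ ≤ ∑ k, (1/2) * ‖v‖^2 * ‖v (E k).1 - v (E k).2‖^2 :=
        Finset.sum_le_sum fun k _ => hb k
    _ = (1/2) * ‖v‖^2 * ∑ k, ‖v (E k).1 - v (E k).2‖^2 := by rw [Finset.mul_sum]
    _ ≤ (1/2) * ‖v‖^2 * (2 * z * ‖v‖^2) := by
        have := sum_sq_norm_sub_le E hE z hdeg v
        have h0 : (0:ℝ) ≤ (1/2) * ‖v‖^2 := by positivity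
        exact mul_le_mul_of_nonneg_left this h0
    _ = z * (‖v‖^2)^2 := by ring

private lemma rig_smul {n d m : ℕ} (E : Fin m → Fin n × Fin n) (p v : Config n d) (c : ℝ) :
    rig E p (c • v) = c • rig E p v := by
  ext k
  show ⟪p (E k).1 - p (E k).2, (c • v) (E k).1 - (c • v) (E k).2⟫_ℝ
      = c * rig E p v k
  have h : (c • v) (E k).1 - (c • v) (E k).2 = c • (v (E k).1 - v (E k).2) := by
    show c • v (E k).1 - c • v (E k).2 = _
    rw [smul_sub]
  rw [h, real_inner_smul_right]
  rfl

private lemma stressForm_smul {n d m : ℕ} (E : Fin m → Fin n × Fin n)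
    (ω : EuclideanSpace ℝ (Fin m)) (v : Config n d) (c : ℝ) :
    stressForm E ω (c • v) = c^2 * stressForm E ω v := by
  rw [stressForm, stressForm, Finset.mul_sum]
  refine Finset.sum_congr rfl fun k _ => ?_
  have h : (c • v) (E k).1 - (c • v) (E k).2 = c • (v (E k).1 - v (E k).2) := by
    show c • v (E k).1 - c • v (E k).2 = _
    rw [smul_sub]
  rw [h, norm_smul, Real.norm_eq_abs, mul_pow, sq_abs]
  ring

private lemma frame_ineq {n d m : ℕ} (E : Fin m → Fin n × Fin n)
    (p : Config n d) (C : Submodule ℝ (Config n d)) (κ lam : ℝ)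
    (ω : EuclideanSpace ℝ (Fin m))
    (hlower : ∀ v ∈ C, ‖v‖ = 1 → lam ≤ 2 * κ * ‖rig E p v‖ ^ 2 + stressForm E ω v)
    (v : Config n d) (hvC : v ∈ C) (hv0 : v ≠ 0) :
    lam * ‖v‖^2 ≤ 2 * κ * ‖rig E p v‖^2 + stressForm E ω v := by
  set t := ‖v‖ with htdef
  have ht : 0 < t := norm_pos_iff.2 hv0
  have key := hlower (t⁻¹ • v) (Submodule.smul_mem C _ hvC) (norm_smul_inv_norm hv0)
  rw [rig_smul, stressForm_smul, norm_smul, Real.norm_eq_abs,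
    abs_of_pos (inv_pos.2 ht)] at key
  have heq : t^2 * (2*κ*(t⁻¹*‖rig E p v‖)^2 + (t⁻¹)^2 * stressForm E ω v)
      = 2*κ*‖rig E p v‖^2 + stressForm E ω v := by
    field_simp
  calc lam * t^2 = t^2 * lam := by ring
    _ ≤ t^2 * (2*κ*(t⁻¹*‖rig E p v‖)^2 + (t⁻¹)^2 * stressForm E ω v) :=
        mul_le_mul_of_nonneg_left (by linarith [key]) (by positivity)
    _ = _ := heq

set_option maxHeartbeats 1000000 in
/-- **Theorem 2 (Outer radius).** Under the framework setup with `D < 1/2`, the radius `η₂`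
(defined piecewise) satisfies `η₂ > η₁`, and any configuration in `𝒞^p` with the same edge
lengths as `p` lying outside the `η₁`-ball lies outside the `η₂`-ball. -/
theorem outer_radius {n d m : ℕ} (E : Fin m → Fin n × Fin n) (hm : 0 < m)
    (hE : ∀ k, (E k).1 ≠ (E k).2)
    (p : Config n d) (C : Submodule ℝ (Config n d))
    (z κ lam μ₀ : ℝ) (ω : EuclideanSpace ℝ (Fin m))
    (hz : 1 ≤ z) (hdeg : degBound E z)
    (hκ : 0 < κ) (hlam : 0 < lam) (hμ₀ : μ₀ ≤ lam / 2)
    (hlower : ∀ v ∈ C, ‖v‖ = 1 → lam ≤ 2 * κ * ‖rig E p v‖ ^ 2 + stressForm E ω v)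
    (hμlower : ∀ v ∈ C, ‖v‖ = 1 → μ₀ ≤ stressForm E ω v)
    (L μbar η₁ D η₂ : ℝ)
    (hL : L = Real.sqrt (lam / (8 * z * κ)))
    (hμbar : μbar = 1 - μ₀ / lam)
    (hη₁ : η₁ = 4 * ‖stressGrad E ω p‖ / lam)
    (hD : D = (η₁ / L) * (Real.sqrt μbar + η₁ / L))
    (hDlt : D < 1 / 2)
    (hη₂ : η₂ =
      if D < 1 / 4 + (1 / 8) * (Real.sqrt μbar * Real.sqrt (μbar + 4) - μbar) then
        L * (Real.sqrt (μbar + 4) - Real.sqrt μbar) / 2 - η₁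
      else
        L * (Real.sqrt (μbar + 2) - Real.sqrt μbar) / 2) :
    η₁ < η₂ ∧
      ∀ q : Config n d, q - p ∈ C →
        (∀ k, ‖q (E k).1 - q (E k).2‖ = ‖p (E k).1 - p (E k).2‖) →
        η₁ < ‖q - p‖ → η₂ ≤ ‖q - p‖ := by
  have hz0 : (0:ℝ) < z := lt_of_lt_of_le one_pos hz
  have hL0 : 0 < L := by rw [hL]; exact Real.sqrt_pos.2 (by positivity)
  have hL2 : L^2 = lam / (8*z*κ) := by rw [hL]; exact Real.sq_sqrt (by positivity)
  have hη₁0 : 0 ≤ η₁ := by rw [hη₁]; positivity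
  have hμb : 1/2 ≤ μbar := by
    have h1 : μ₀ / lam ≤ 1/2 := by rw [div_le_iff₀ hlam]; linarith
    rw [hμbar]; linarith
  set s := Real.sqrt μbar with hsdef
  have hs0 : 0 ≤ s := Real.sqrt_nonneg _
  have hs2 : s^2 = μbar := Real.sq_sqrt (by linarith)
  have hs2' : 1/2 ≤ s^2 := by rw [hs2]; exact hμb
  set u := Real.sqrt (μbar + 4) with hudef
  have hu0 : 0 ≤ u := Real.sqrt_nonneg _
  have hu2 : u^2 = s^2 + 4 := by rw [hudef, Real.sq_sqrt (by linarith), hs2]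
  set w := Real.sqrt (μbar + 2) with hwdef
  have hw0 : 0 ≤ w := Real.sqrt_nonneg _
  have hw2 : w^2 = s^2 + 2 := by rw [hwdef, Real.sq_sqrt (by linarith), hs2]
  have hmain : η₁ < η₂ ∧ 2*η₂^2 ≤ L^2 := by
    by_cases hc : D < 1 / 4 + (1 / 8) * (s * u - μbar)
    · rw [hη₂, if_pos hc]
      have hc' : (η₁/L) * (s + η₁/L) < 1/4 + (1/8)*(s*u - s^2) := by
        rw [hD] at hc; rw [hs2]; exact hc
      have h := outerAux1 L η₁ s u hL0 hη₁0 hs0 hs2' hu0 hu2 hc'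
      constructor
      · have := h.1; linarith [this]
      · have := h.2; linarith [this]
    · rw [hη₂, if_neg hc]
      have hc' : (η₁/L) * (s + η₁/L) < 1/2 := by rw [hD] at hDlt; exact hDlt
      have h := outerAux2 L η₁ s w hL0 hη₁0 hs0 hs2' hw0 hw2 hc'
      exact ⟨h.1, h.2⟩
  refine ⟨hmain.1, ?_⟩
  intro q hqC hlen ht1
  set v := q - p with hvdef
  set t := ‖v‖ with htdef
  have ht0 : 0 < t := lt_of_le_of_lt hη₁0 ht1
  have hv0 : v ≠ 0 := norm_pos_iff.1 ht0
  have hrigv : ∀ k, rig E p v k = -(1/2) * ‖v (E k).1 - v (E k).2‖^2 := by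
    intro k
    have hva : v (E k).1 = q (E k).1 - p (E k).1 := rfl
    have hvb : v (E k).2 = q (E k).2 - p (E k).2 := rfl
    have hq : q (E k).1 - q (E k).2
        = (p (E k).1 - p (E k).2) + (v (E k).1 - v (E k).2) := by
      rw [hva, hvb]; abel
    have h2 : ‖(p (E k).1 - p (E k).2) + (v (E k).1 - v (E k).2)‖^2
        = ‖p (E k).1 - p (E k).2‖^2 := by rw [← hq, hlen k]
    rw [norm_add_sq_real] at h2
    show ⟪p (E k).1 - p (E k).2, v (E k).1 - v (E k).2⟫_ℝ = _
    linarith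
  have hRle : ‖rig E p v‖^2 ≤ z * (t^2)^2 := norm_rig_sq_le E hE z hdeg p v hrigv
  have hgnorm : ‖stressGrad E ω p‖ = η₁ * lam / 4 := by
    rw [hη₁]; field_simp
  have hΩ : stressForm E ω v ≤ (η₁ * lam / 2) * t := by
    have h1 : ⟪stressGrad E ω p, v⟫_ℝ = ∑ k, ω k * rig E p v k :=
      inner_stressGrad E ω p v
    have h2 : stressForm E ω v = -2 * ⟪stressGrad E ω p, v⟫_ℝ := by
      rw [h1, Finset.mul_sum, stressForm]
      refine Finset.sum_congr rfl fun k _ => ?_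
      rw [hrigv k]; ring
    have h3 := abs_real_inner_le_norm (stressGrad E ω p) v
    have h4 := neg_abs_le ⟪stressGrad E ω p, v⟫_ℝ
    rw [h2]
    rw [hgnorm] at h3
    rw [abs_le] at h3
    linarith [h3.1]
  have hframe := frame_ineq E p C κ lam ω hlower v hqC hv0
  have hcubic : 0 ≤ t^3 - 4*L^2*t + 2*L^2*η₁ := by
    have hzκL : 8*z*κ*L^2 = lam := by
      rw [hL2]; field_simp
    have h5 : lam * t^2 ≤ 2*κ*(z*(t^2)^2) + (η₁*lam/2)*t := by
      have h6 : 2*κ*‖rig E p v‖^2 ≤ 2*κ*(z*(t^2)^2) :=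
        mul_le_mul_of_nonneg_left hRle (by positivity)
      calc lam * t^2 ≤ 2 * κ * ‖rig E p v‖^2 + stressForm E ω v := hframe
        _ ≤ 2*κ*(z*(t^2)^2) + (η₁*lam/2)*t := by linarith
    have h6' := mul_le_mul_of_nonneg_left h5 (by positivity : (0:ℝ) ≤ 4*L^2)
    have h7 : (8*z*κ*L^2)*(t^2)^2 = lam*(t^2)^2 := by rw [hzκL]
    have h8 : (8*z*κ*L^2)*t = lam*t := by rw [hzκL]
    have h9 : lam * (4*L^2*t^2) ≤ lam * (t^4 + 2*L^2*η₁*t) := by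
      ring_nf at h6' h7 ⊢
      linarith [h6', h7]
    have h10 : 4*L^2*t^2 ≤ t^4 + 2*L^2*η₁*t := le_of_mul_le_mul_left h9 hlam
    by_contra hneg
    push_neg at hneg
    have hx := mul_pos ht0 (show 0 < 4*L^2*t - t^3 - 2*L^2*η₁ by linarith)
    ring_nf at hx h10
    linarith [hx, h10]
  by_contra hfin
  push_neg at hfin
  exact cubicExclude L η₁ η₂ t hη₁0 hmain.1 hmain.2 ht1 hfin hcubic
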